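/- Let Σ be a finite set, |Σ| = n ≥ 1, E finite, C : E → P(Σ) with each C(e) nonempty, ω : E → ℝ. Define uPSD : P(Σ) → ℝ by uPSD(X) = Σ_{e : X ∩ C(e) ≠ ∅ and X ⊄ C(e)} ω(e) (i.e., arcs e with X ∩ C(e) ≠ ∅ and X not a subset of C(e)). Then for every a ∈ Σ with |C(e)| < n for all e with a ∉ C(e), the Shapley value of uPSD on a equals (1/n)·Σ_{e : a ∈ C(e)} ((n−|C(e)|)/|C(e)|)·ω(e) + (1/n)·Σ_{e : a ∉ C(e)} (|C(e)|/(n−|C(e)|))·ω(e). -/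

import Mathlib

open Finset

private lemma natIden (n m : ℕ) (h : m < n) :
    (n - m) * ∑ j ∈ range (m+1), m.choose j * j.factorial * (n-1-j).factorial
      = n.factorial := by
  have key : ∀ i ∈ range (m+1),
      m.choose (m - i) * (m - i).factorial * (n-1-(m-i)).factorial
        = m.factorial * (n-1-m).factorial * ((i + (n-1-m)).choose (n-1-m)) := by
    intro i hi
    rw [mem_range] at hi
    have hi' : i ≤ m := by omega
    have h1 : n - 1 - (m - i) = i + (n - 1 - m) := by omega
    have h2 : m.choose (m - i) * (m - i).factorial * i.factorial = m.factorial := by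
      have := Nat.choose_mul_factorial_mul_factorial (Nat.sub_le m i)
      rwa [Nat.sub_sub_self hi'] at this
    have h3 : (i + (n-1-m)).choose (n-1-m) * (n-1-m).factorial * i.factorial
        = (i + (n-1-m)).factorial := by
      have := Nat.choose_mul_factorial_mul_factorial (Nat.le_add_left (n-1-m) i)
      rwa [Nat.add_sub_cancel] at this
    apply Nat.eq_of_mul_eq_mul_right (Nat.factorial_pos i)
    rw [h1]
    calc m.choose (m - i) * (m - i).factorial * (i + (n-1-m)).factorial * i.factorial
        = (m.choose (m - i) * (m - i).factorial * i.factorial) * (i + (n-1-m)).factorial := by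
          ring
      _ = m.factorial * (i + (n-1-m)).factorial := by rw [h2]
      _ = m.factorial * (n-1-m).factorial * ((i + (n-1-m)).choose (n-1-m)) * i.factorial := by
          rw [← h3]; ring
  have hsum : ∑ j ∈ range (m+1), m.choose j * j.factorial * (n-1-j).factorial
      = m.factorial * (n-1-m).factorial * ∑ i ∈ range (m+1), (i + (n-1-m)).choose (n-1-m) := by
    rw [← Finset.sum_range_reflect (fun j => m.choose j * j.factorial * (n-1-j).factorial) (m+1),
      Finset.mul_sum]
    exact Finset.sum_congr rfl (by simpa using key)
  rw [hsum, Nat.sum_range_add_choose m (n-1-m)]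
  have e1 : m + (n-1-m) + 1 = n := by omega
  have e2 : n - 1 - m + 1 = n - m := by omega
  rw [e1, e2]
  have e3 : (n - m) * (n-1-m).factorial = (n - m).factorial := by
    have : n - m = (n - 1 - m) + 1 := by omega
    rw [this, Nat.factorial_succ]
  calc (n - m) * (m.factorial * (n-1-m).factorial * n.choose (n - m))
      = n.choose (n - m) * (n - m).factorial * m.factorial := by rw [← e3]; ring
    _ = n.factorial := by
        have := Nat.choose_mul_factorial_mul_factorial (Nat.sub_le n m)
        rwa [Nat.sub_sub_self (Nat.le_of_lt h)] at this

private lemma realIden (n m : ℕ) (h : m < n) :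
    ∑ j ∈ range (m+1), (m.choose j : ℝ) *
        ((j.factorial * (n-1-j).factorial : ℝ) / (n.factorial : ℝ))
      = 1 / ((n - m : ℕ) : ℝ) := by
  have hfac : (n.factorial : ℝ) ≠ 0 := Nat.cast_ne_zero.mpr (Nat.factorial_ne_zero n)
  have hnm : ((n - m : ℕ) : ℝ) ≠ 0 := by
    have : 0 < n - m := by omega
    positivity
  have hA : ((∑ j ∈ range (m+1), m.choose j * j.factorial * (n-1-j).factorial : ℕ) : ℝ)
      = (n.factorial : ℝ) / ((n - m : ℕ) : ℝ) := by
    rw [eq_div_iff hnm, mul_comm]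
    exact_mod_cast congrArg (Nat.cast : ℕ → ℝ) (natIden n m h)
  calc ∑ j ∈ range (m+1), (m.choose j : ℝ) *
        ((j.factorial * (n-1-j).factorial : ℝ) / (n.factorial : ℝ))
      = (∑ j ∈ range (m+1),
          ((m.choose j * j.factorial * (n-1-j).factorial : ℕ) : ℝ)) / (n.factorial : ℝ) := by
        rw [Finset.sum_div]
        refine Finset.sum_congr rfl fun j _ => ?_
        push_cast
        ring
    _ = 1 / ((n - m : ℕ) : ℝ) := by
        rw [Nat.cast_sum] at hA
        rw [hA]
        rw [div_div, mul_comm, ← div_div, div_self hfac]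

private lemma keySum {α : Type*} [Fintype α] [DecidableEq α] (a : α) (D : Finset α)
    (haD : a ∉ D) (hD : D.card < Fintype.card α) :
    ∑ X ∈ univ.powerset.filter (fun X => a ∈ X),
      (((X.card - 1).factorial * (Fintype.card α - X.card).factorial : ℝ) /
        (Fintype.card α).factorial) *
      (if (X.erase a ⊆ D ∧ (X.erase a).Nonempty) then (1:ℝ) else 0)
    = 1 / ((Fintype.card α - D.card : ℕ) : ℝ) - 1 / (Fintype.card α : ℝ) := by
  classical
  set n := Fintype.card α with hn
  have step1 : ∑ X ∈ univ.powerset.filter (fun X => a ∈ X),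
      (((X.card - 1).factorial * (n - X.card).factorial : ℝ) / (n).factorial) *
      (if (X.erase a ⊆ D ∧ (X.erase a).Nonempty) then (1:ℝ) else 0)
    = ∑ X ∈ (univ.powerset.filter (fun X => a ∈ X)).filter
        (fun X => X.erase a ⊆ D ∧ (X.erase a).Nonempty),
      (((X.card - 1).factorial * (n - X.card).factorial : ℝ) / (n).factorial) := by
    rw [eq_comm]
    exact (Finset.sum_filter _ _).trans (Finset.sum_congr rfl fun X _ => by
      by_cases h : X.erase a ⊆ D ∧ (X.erase a).Nonempty <;> simp [h])
  rw [step1]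
  have step2 : ∑ X ∈ (univ.powerset.filter (fun X => a ∈ X)).filter
        (fun X => X.erase a ⊆ D ∧ (X.erase a).Nonempty),
      (((X.card - 1).factorial * (n - X.card).factorial : ℝ) / (n).factorial)
    = ∑ Y ∈ D.powerset.filter (fun Y => Y.Nonempty),
      ((Y.card.factorial * (n - 1 - Y.card).factorial : ℝ) / (n).factorial) := by
    refine Finset.sum_nbij' (fun X => X.erase a) (fun Y => insert a Y) ?_ ?_ ?_ ?_ ?_
    · intro X hX
      simp only [Finset.mem_filter] at hX ⊢
      exact ⟨Finset.mem_powerset.mpr hX.2.1, hX.2.2⟩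
    · intro Y hY
      simp only [Finset.mem_filter, Finset.mem_powerset] at hY ⊢
      have haY : a ∉ Y := fun h => haD (hY.1 h)
      refine ⟨⟨Finset.subset_univ _, Finset.mem_insert_self a Y⟩, ?_, ?_⟩
      · rw [Finset.erase_insert haY]; exact hY.1
      · rw [Finset.erase_insert haY]; exact hY.2
    · intro X hX
      simp only [Finset.mem_filter] at hX
      exact Finset.insert_erase hX.1.2
    · intro Y hY
      simp only [Finset.mem_filter, Finset.mem_powerset] at hY
      exact Finset.erase_insert (fun h => haD (hY.1 h))
    · intro X hX
      simp only [Finset.mem_filter] at hX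
      have haX : a ∈ X := hX.1.2
      have hcard : (X.erase a).card = X.card - 1 := Finset.card_erase_of_mem haX
      have hpos : 1 ≤ X.card := Finset.card_pos.mpr ⟨a, haX⟩
      have hidx : n - 1 - (X.card - 1) = n - X.card := by omega
      rw [hcard, hidx]
  rw [step2]
  have step3 : D.powerset.filter (fun Y => Y.Nonempty) = D.powerset.erase ∅ := by
    ext Y
    simp [Finset.nonempty_iff_ne_empty, and_comm]
  rw [step3]
  have step4 := Finset.sum_erase_add D.powerset
    (fun Y => ((Y.card.factorial * (n - 1 - Y.card).factorial : ℝ) / (n).factorial))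
    (Finset.empty_mem_powerset D)
  have step5 : ∑ Y ∈ D.powerset,
      ((Y.card.factorial * (n - 1 - Y.card).factorial : ℝ) / (n).factorial)
      = 1 / ((n - D.card : ℕ) : ℝ) := by
    rw [Finset.sum_powerset_apply_card
      (fun j => ((j.factorial * (n - 1 - j).factorial : ℝ) / (n).factorial))]
    rw [← realIden n D.card hD]
    exact Finset.sum_congr rfl fun j _ => by rw [nsmul_eq_mul]
  have hn1 : 1 ≤ n := by omega
  have hempty : ((Finset.card (∅ : Finset α)).factorial *
      (n - 1 - (Finset.card (∅ : Finset α))).factorial : ℝ) / (n).factorial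
      = 1 / (n : ℝ) := by
    simp only [Finset.card_empty, Nat.factorial_zero, Nat.sub_zero, Nat.cast_one, one_mul]
    have : n.factorial = n * (n-1).factorial := by
      have : n = (n - 1) + 1 := by omega
      rw [this, Nat.factorial_succ]
      congr 1 <;> omega
    rw [this]
    have h1 : ((n-1).factorial : ℝ) ≠ 0 := Nat.cast_ne_zero.mpr (Nat.factorial_ne_zero _)
    have h2 : (n : ℝ) ≠ 0 := by positivity
    push_cast
    field_simp
  linarith [step4, step5, hempty]

private lemma delta {α : Type*} [Fintype α] [DecidableEq α] (a : α) (c X : Finset α)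
    (hX : a ∈ X) (r : ℝ) :
    (if (X ∩ c).Nonempty ∧ ¬ X ⊆ c then r else 0) -
      (if ((X.erase a) ∩ c).Nonempty ∧ ¬ (X.erase a) ⊆ c then r else 0)
    = if ((X.erase a) ⊆ (if a ∈ c then univ \ c else c) ∧ (X.erase a).Nonempty)
        then r else 0 := by
  classical
  by_cases hac : a ∈ c
  · rw [if_pos hac]
    have claim1 : ((X ∩ c).Nonempty ∧ ¬ X ⊆ c) ↔
        ((X.erase a ⊆ univ \ c ∧ (X.erase a).Nonempty) ∨
          (((X.erase a) ∩ c).Nonempty ∧ ¬ (X.erase a) ⊆ c)) := by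
      constructor
      · rintro ⟨-, h2⟩
        obtain ⟨b, hbX, hbc⟩ := Finset.not_subset.mp h2
        have hba : b ≠ a := fun h => hbc (h ▸ hac)
        have hbX' : b ∈ X.erase a := Finset.mem_erase.mpr ⟨hba, hbX⟩
        by_cases hsub : X.erase a ⊆ univ \ c
        · exact Or.inl ⟨hsub, ⟨b, hbX'⟩⟩
        · obtain ⟨d, hdX', hd⟩ := Finset.not_subset.mp hsub
          have hdc : d ∈ c := by
            by_contra hdc
            exact hd (Finset.mem_sdiff.mpr ⟨Finset.mem_univ d, hdc⟩)
          refine Or.inr ⟨⟨d, Finset.mem_inter.mpr ⟨hdX', hdc⟩⟩, ?_⟩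
          exact Finset.not_subset.mpr ⟨b, hbX', hbc⟩
      · rintro (⟨hsub, ⟨b, hb⟩⟩ | ⟨-, hns⟩)
        · refine ⟨⟨a, Finset.mem_inter.mpr ⟨hX, hac⟩⟩, ?_⟩
          have hbc : b ∉ c := (Finset.mem_sdiff.mp (hsub hb)).2
          exact Finset.not_subset.mpr ⟨b, Finset.mem_of_mem_erase hb, hbc⟩
        · obtain ⟨b, hbX', hbc⟩ := Finset.not_subset.mp hns
          exact ⟨⟨a, Finset.mem_inter.mpr ⟨hX, hac⟩⟩,
            Finset.not_subset.mpr ⟨b, Finset.mem_of_mem_erase hbX', hbc⟩⟩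
    have claim2 : ¬((X.erase a ⊆ univ \ c ∧ (X.erase a).Nonempty) ∧
        (((X.erase a) ∩ c).Nonempty ∧ ¬ (X.erase a) ⊆ c)) := by
      rintro ⟨⟨hsub, -⟩, ⟨⟨d, hd⟩, -⟩⟩
      have hd1 := Finset.mem_inter.mp hd
      exact (Finset.mem_sdiff.mp (hsub hd1.1)).2 hd1.2
    by_cases hG : X.erase a ⊆ univ \ c ∧ (X.erase a).Nonempty
    · rw [if_pos hG, if_pos (claim1.mpr (Or.inl hG)),
        if_neg (fun h => claim2 ⟨hG, h⟩), sub_zero]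
    · rw [if_neg hG]
      by_cases hP' : ((X.erase a) ∩ c).Nonempty ∧ ¬ (X.erase a) ⊆ c
      · rw [if_pos hP', if_pos (claim1.mpr (Or.inr hP')), sub_self]
      · rw [if_neg hP', if_neg (fun h => (claim1.mp h).elim hG hP'), sub_self]
  · rw [if_neg hac]
    have claim1 : ((X ∩ c).Nonempty ∧ ¬ X ⊆ c) ↔
        ((X.erase a ⊆ c ∧ (X.erase a).Nonempty) ∨
          (((X.erase a) ∩ c).Nonempty ∧ ¬ (X.erase a) ⊆ c)) := by
      constructor
      · rintro ⟨⟨b, hb⟩, -⟩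
        have hb1 := Finset.mem_inter.mp hb
        have hba : b ≠ a := fun h => hac (h ▸ hb1.2)
        have hbX' : b ∈ X.erase a := Finset.mem_erase.mpr ⟨hba, hb1.1⟩
        by_cases hsub : X.erase a ⊆ c
        · exact Or.inl ⟨hsub, ⟨b, hbX'⟩⟩
        · exact Or.inr ⟨⟨b, Finset.mem_inter.mpr ⟨hbX', hb1.2⟩⟩, hsub⟩
      · have hnsub : ¬ X ⊆ c := Finset.not_subset.mpr ⟨a, hX, hac⟩
        rintro (⟨hsub, ⟨b, hb⟩⟩ | ⟨⟨d, hd⟩, -⟩)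
        · exact ⟨⟨b, Finset.mem_inter.mpr ⟨Finset.mem_of_mem_erase hb, hsub hb⟩⟩, hnsub⟩
        · have hd1 := Finset.mem_inter.mp hd
          exact ⟨⟨d, Finset.mem_inter.mpr ⟨Finset.mem_of_mem_erase hd1.1, hd1.2⟩⟩, hnsub⟩
    have claim2 : ¬((X.erase a ⊆ c ∧ (X.erase a).Nonempty) ∧
        (((X.erase a) ∩ c).Nonempty ∧ ¬ (X.erase a) ⊆ c)) := by
      rintro ⟨⟨hsub, -⟩, ⟨-, hns⟩⟩
      exact hns hsub
    by_cases hG : X.erase a ⊆ c ∧ (X.erase a).Nonempty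
    · rw [if_pos hG, if_pos (claim1.mpr (Or.inl hG)),
        if_neg (fun h => claim2 ⟨hG, h⟩), sub_zero]
    · rw [if_neg hG]
      by_cases hP' : ((X.erase a) ∩ c).Nonempty ∧ ¬ (X.erase a) ⊆ c
      · rw [if_pos hP', if_pos (claim1.mpr (Or.inr hP')), sub_self]
      · rw [if_neg hP', if_neg (fun h => (claim1.mp h).elim hG hP'), sub_self]

theorem stmt_5 {α E : Type*} [Fintype α] [DecidableEq α] [Fintype E]
    (hn : 1 ≤ Fintype.card α)
    (C : E → Finset α) (hC : ∀ e, (C e).Nonempty) (ω : E → ℝ)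
    (a : α) (ha : ∀ e, a ∉ C e → (C e).card < Fintype.card α) :
    ∑ X ∈ univ.powerset.filter (fun X => a ∈ X),
      (((X.card - 1).factorial * (Fintype.card α - X.card).factorial : ℝ) /
        (Fintype.card α).factorial) *
      ((∑ e ∈ univ.filter (fun e => (X ∩ C e).Nonempty ∧ ¬ X ⊆ C e), ω e) -
       (∑ e ∈ univ.filter (fun e => ((X.erase a) ∩ C e).Nonempty ∧ ¬ (X.erase a) ⊆ C e), ω e)) =
    (1 / (Fintype.card α : ℝ)) *
        ∑ e ∈ univ.filter (fun e => a ∈ C e),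
          (((Fintype.card α - (C e).card : ℕ) : ℝ) / (C e).card) * ω e +
      (1 / (Fintype.card α : ℝ)) *
        ∑ e ∈ univ.filter (fun e => a ∉ C e),
          (((C e).card : ℝ) / ((Fintype.card α - (C e).card : ℕ) : ℝ)) * ω e := by
  classical
  set n := Fintype.card α with hndef
  calc ∑ X ∈ univ.powerset.filter (fun X => a ∈ X),
      (((X.card - 1).factorial * (n - X.card).factorial : ℝ) / (n).factorial) *
      ((∑ e ∈ univ.filter (fun e => (X ∩ C e).Nonempty ∧ ¬ X ⊆ C e), ω e) -
       (∑ e ∈ univ.filter (fun e => ((X.erase a) ∩ C e).Nonempty ∧ ¬ (X.erase a) ⊆ C e), ω e))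
      = ∑ X ∈ univ.powerset.filter (fun X => a ∈ X), ∑ e ∈ (univ : Finset E),
          ((((X.card - 1).factorial * (n - X.card).factorial : ℝ) / (n).factorial) *
            (if (X.erase a ⊆ (if a ∈ C e then univ \ C e else C e) ∧ (X.erase a).Nonempty)
              then (1:ℝ) else 0)) * ω e := by
        refine Finset.sum_congr rfl fun X hX => ?_
        have haX : a ∈ X := (Finset.mem_filter.mp hX).2
        rw [Finset.sum_filter, Finset.sum_filter, ← Finset.sum_sub_distrib, Finset.mul_sum]
        refine Finset.sum_congr rfl fun e _ => ?_
        rw [delta a (C e) X haX (ω e)]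
        by_cases hg : (X.erase a ⊆ (if a ∈ C e then univ \ C e else C e) ∧
            (X.erase a).Nonempty)
        · rw [if_pos hg, if_pos hg]; ring
        · rw [if_neg hg, if_neg hg]; ring
    _ = ∑ e ∈ (univ : Finset E), ∑ X ∈ univ.powerset.filter (fun X => a ∈ X),
          ((((X.card - 1).factorial * (n - X.card).factorial : ℝ) / (n).factorial) *
            (if (X.erase a ⊆ (if a ∈ C e then univ \ C e else C e) ∧ (X.erase a).Nonempty)
              then (1:ℝ) else 0)) * ω e := Finset.sum_comm
    _ = ∑ e ∈ (univ : Finset E),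
          (1 / ((n - (if a ∈ C e then univ \ C e else C e).card : ℕ) : ℝ) - 1 / (n : ℝ))
            * ω e := by
        refine Finset.sum_congr rfl fun e _ => ?_
        rw [← Finset.sum_mul]
        congr 1
        refine keySum a (if a ∈ C e then univ \ C e else C e) ?_ ?_
        · by_cases h : a ∈ C e
          · simp [h]
          · simp [h]
        · by_cases h : a ∈ C e
          · rw [if_pos h, Finset.card_sdiff_of_subset (Finset.subset_univ _), Finset.card_univ]
            have : 1 ≤ (C e).card := Finset.card_pos.mpr (hC e)
            have : (C e).card ≤ n := by
              rw [hndef]; exact (Finset.card_le_univ (C e)).trans (le_of_eq Finset.card_univ)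
            omega
          · rw [if_neg h]; exact ha e h
    _ = _ := by
        rw [← Finset.sum_filter_add_sum_filter_not (univ : Finset E) (fun e => a ∈ C e)]
        congr 1
        · rw [Finset.mul_sum]
          refine Finset.sum_congr rfl fun e he => ?_
          have hae : a ∈ C e := (Finset.mem_filter.mp he).2
          have hc1 : 1 ≤ (C e).card := Finset.card_pos.mpr (hC e)
          have hcn : (C e).card ≤ n := Finset.card_le_univ (C e)
          rw [if_pos hae, Finset.card_sdiff_of_subset (Finset.subset_univ _), Finset.card_univ]
          have h1 : n - (n - (C e).card) = (C e).card := by omega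
          rw [h1]
          have hcast : ((n - (C e).card : ℕ) : ℝ) = (n : ℝ) - ((C e).card : ℝ) := by
            push_cast [Nat.cast_sub hcn]; ring
          rw [hcast]
          have hc0 : ((C e).card : ℝ) ≠ 0 := by positivity
          have hn0 : (n : ℝ) ≠ 0 := by positivity
          field_simp
        · rw [Finset.mul_sum]
          refine Finset.sum_congr rfl fun e he => ?_
          have hae : a ∉ C e := by
            have := (Finset.mem_filter.mp he).2
            simpa using this
          have hc1 : 1 ≤ (C e).card := Finset.card_pos.mpr (hC e)
          have hcn : (C e).card < n := ha e hae
          rw [if_neg hae]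
          have hcast : ((n - (C e).card : ℕ) : ℝ) = (n : ℝ) - ((C e).card : ℝ) := by
            push_cast [Nat.cast_sub (le_of_lt hcn)]; ring
          rw [hcast]
          have hc0 : ((C e).card : ℝ) ≠ 0 := by positivity
          have hn0 : (n : ℝ) ≠ 0 := by positivity
          have hnc0 : (n : ℝ) - ((C e).card : ℝ) ≠ 0 := by
            have : ((C e).card : ℝ) < (n : ℝ) := by exact_mod_cast hcn
            linarith
          field_simp
          ring
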